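/- arXiv:1611.04226 — 6 statements merged into one kernel-verified Lean document; each statement's English description precedes it below -/
import Mathlib

section
/- Let R be a finite principal ideal ring and let a, b ∈ R. Then the annihilator ideal of a is contained in the annihilator ideal of b if and only if a divides b. -/
open Submodule LinearMap

lemma card_ann_mul (R : Type*) [CommRing R] [Finite R] (x : R) :
    Nat.card R = Nat.card (ker (toSpanSingleton R R x)) *
      Nat.card (Ideal.span {x} : Ideal R) := by
  rw [Submodule.card_eq_card_quotient_mul_card (ker (toSpanSingleton R R x))]
  congr 1
  have e := (toSpanSingleton R R x).quotKerEquivRange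
  rw [Nat.card_congr e.toEquiv]
  have : (Ideal.span {x} : Ideal R) = range (toSpanSingleton R R x) := by
    exact LinearMap.span_singleton_eq_range R R x
  rw [this]

/-- Let `R` be a finite (commutative) principal ideal ring and `a b : R`.
Then the annihilator of `a` is contained in the annihilator of `b` iff `a` divides `b`. -/
theorem ann_subset_ann_iff_dvd (R : Type*) [CommRing R] [Finite R]
    [IsPrincipalIdealRing R] (a b : R) :
    {r : R | a * r = 0} ⊆ {r : R | b * r = 0} ↔ a ∣ b := by
  constructor
  · intro h
    -- annihilator ideal of a
    set K : Ideal R := ker (toSpanSingleton R R a) with hK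
    have hKmem : ∀ r, r ∈ K ↔ a * r = 0 := by
      intro r; simp [hK, toSpanSingleton, mem_ker, smul_eq_mul, mul_comm]
    obtain ⟨c, hc⟩ := Submodule.IsPrincipal.principal K
    -- a ∈ ann(c) := ker (toSpanSingleton R R c)
    have hac : a * c = 0 := by
      have : c ∈ K := hc ▸ Ideal.subset_span rfl
      rw [hKmem] at this
      linear_combination this
    have hspan_le : Ideal.span {a} ≤ ker (toSpanSingleton R R c) := by
      rw [Ideal.span_le]
      rintro _ rfl
      simp [toSpanSingleton, mem_ker, smul_eq_mul, mul_comm]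
      linear_combination hac
    -- cardinalities
    have h1 := card_ann_mul R a
    have h2 := card_ann_mul R c
    have hKc : Nat.card K = Nat.card (Ideal.span {c} : Ideal R) := by rw [hc]
    have hcards : Nat.card (Ideal.span {a} : Ideal R)
        = Nat.card (ker (toSpanSingleton R R c)) := by
      have hpos : ∀ (S : Submodule R R), 0 < Nat.card S := fun S =>
        Nat.card_pos
      nlinarith [hpos (Ideal.span {a} : Ideal R), hpos (ker (toSpanSingleton R R c)),
        hpos K, hpos (Ideal.span {c} : Ideal R), hKc ▸ h1, h2]
    have heq : Ideal.span {a} = ker (toSpanSingleton R R c) := by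
      apply le_antisymm hspan_le
      rw [← SetLike.coe_subset_coe]
      apply Set.eq_of_subset_of_ncard_le _ _ (Set.toFinite _) |>.symm.subset
      · exact hspan_le
      · rw [← Nat.card_coe_set_eq, ← Nat.card_coe_set_eq]
        exact hcards.ge
    have hbc : b * c = 0 := h hac
    have hb : b ∈ ker (toSpanSingleton R R c) := by
      simp only [mem_ker, toSpanSingleton_apply, smul_eq_mul]
      linear_combination hbc
    rw [← heq, Ideal.mem_span_singleton] at hb
    exact hb
  · rintro ⟨k, rfl⟩ r hr
    simp only [Set.mem_setOf_eq] at hr ⊢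
    rw [mul_assoc, mul_comm k r, ← mul_assoc, hr, zero_mul]
end

section
/- Let R be a commutative ring and let M, N be R-submodules of an R-module Ω, all of finite length. Then the function d(M,N) = λ(M) + λ(N) − 2λ(M ∩ N) is a metric on the set of R-submodules of Ω; in particular it satisfies the triangle inequality d(M,N) ≤ d(M,P) + d(P,N) for all submodules M, N, P of Ω. -/
/-- The length of a submodule `M` of `Ω`: the supremum of lengths of strictly
increasing chains of submodules of `M` (as a natural number). -/
noncomputable def submodLength {R : Type*} [Ring R] {Ω : Type*} [AddCommGroup Ω]
    [Module R Ω] (M : Submodule R Ω) : ℕ :=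
  (WithBot.unbotD 0 (Order.krullDim (Submodule R ↥M))).toNat

open Order

section aux

variable {R : Type*} [CommRing R] {Ω : Type*} [AddCommGroup Ω] [Module R Ω]

/-- Covering in an order-connected subset agrees with covering in the ambient lattice. -/
lemma covBy_coe_iff' {α : Type*} [Preorder α] {s : Set α} (hs : s.OrdConnected) {x y : s} :
    x ⋖ y ↔ (x : α) ⋖ (y : α) := by
  constructor
  · rintro ⟨h1, h2⟩
    refine ⟨h1, fun z hz1 hz2 => ?_⟩
    have hz : z ∈ s := hs.out x.2 y.2 ⟨hz1.le, hz2.le⟩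
    exact h2 (show x < (⟨z, hz⟩ : s) from hz1) hz2
  · rintro ⟨h1, h2⟩
    exact ⟨h1, fun z hz1 hz2 => h2 hz1 hz2⟩

lemma exists_cs (hfin : IsFiniteLength R Ω) (a b : Submodule R Ω) (hab : a ≤ b) :
    ∃ s : CompositionSeries (Submodule R Ω), s.head = a ∧ s.last = b := by
  obtain ⟨hN, hA⟩ := isFiniteLength_iff_isNoetherian_isArtinian.mp hfin
  haveI : Nonempty (Set.Icc a b) := ⟨⟨a, le_refl a, hab⟩⟩
  obtain ⟨f, hf0, n, hfn, hstep⟩ := exists_covBy_seq_of_wellFoundedLT_wellFoundedGT (Set.Icc a b)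
  refine ⟨⟨n, fun i => ((f i : Set.Icc a b) : Submodule R Ω), fun i => ?_⟩, ?_, ?_⟩
  · show ((f i.castSucc : Set.Icc a b) : Submodule R Ω) ⋖ _
    have := hstep i.1 i.2
    have h := (covBy_coe_iff' Set.ordConnected_Icc).mp this
    simpa using h
  · show ((f 0 : Set.Icc a b) : Submodule R Ω) = a
    have h1 : a ≤ (f 0 : Submodule R Ω) := (f 0).2.1
    have h2 : (⟨a, le_refl a, hab⟩ : Set.Icc a b) ≤ f 0 := h1
    exact le_antisymm (hf0 h2) h1
  · show ((f (Fin.last n) : Set.Icc a b) : Submodule R Ω) = b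
    simp only [Fin.val_last]
    have h1 : (f n : Submodule R Ω) ≤ b := (f n).2.2
    have h2 : f n ≤ (⟨b, hab, le_refl b⟩ : Set.Icc a b) := h1
    exact le_antisymm h1 (hfn h2)

variable (hfin : IsFiniteLength R Ω)

/-- The length of a submodule, via a chosen composition series from `⊥`. -/
noncomputable def lam (a : Submodule R Ω) : ℕ :=
  (exists_cs hfin ⊥ a bot_le).choose.length

lemma lam_eq (s : CompositionSeries (Submodule R Ω)) (h0 : s.head = ⊥) :
    lam hfin s.last = s.length := by
  obtain ⟨h1, h2⟩ := (exists_cs hfin ⊥ s.last bot_le).choose_spec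
  exact (CompositionSeries.jordan_holder _ s (h1.trans h0.symm) h2).length_eq

lemma lam_add {a b : Submodule R Ω} (hab : a ≤ b) (t : CompositionSeries (Submodule R Ω))
    (h1 : t.head = a) (h2 : t.last = b) : lam hfin b = lam hfin a + t.length := by
  obtain ⟨hs1, hs2⟩ := (exists_cs hfin ⊥ a bot_le).choose_spec
  set s := (exists_cs hfin ⊥ a bot_le).choose with hsdef
  have hconn : s.last = t.head := by rw [hs2, h1]
  have hu := lam_eq hfin (s.smash t hconn) (by rw [RelSeries.head_smash, hs1])
  rw [RelSeries.last_smash, h2] at hu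
  have hlen : (s.smash t hconn).length = s.length + t.length := rfl
  rw [hu, hlen]
  congr 1


lemma lam_mono {a b : Submodule R Ω} (hab : a ≤ b) : lam hfin a ≤ lam hfin b := by
  obtain ⟨t, h1, h2⟩ := exists_cs hfin a b hab
  rw [lam_add hfin hab t h1 h2]
  omega

lemma lam_strictMono {a b : Submodule R Ω} (hab : a < b) : lam hfin a < lam hfin b := by
  obtain ⟨t, h1, h2⟩ := exists_cs hfin a b hab.le
  rw [lam_add hfin hab.le t h1 h2]
  have ht : t.length ≠ 0 := by
    intro h0
    have : t.head = t.last := by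
      show t.toFun 0 = t.toFun (Fin.last t.length)
      congr 1
      ext
      simp [h0]
    exact hab.ne (h1 ▸ h2 ▸ this)
  omega

lemma lam_sup_add_inf (a b : Submodule R Ω) :
    lam hfin (a ⊔ b) + lam hfin (a ⊓ b) = lam hfin a + lam hfin b := by
  obtain ⟨t, h1, h2⟩ := exists_cs hfin (a ⊓ b) a inf_le_left
  -- transport `t` through the diamond isomorphism to a series from `b` to `a ⊔ b`
  have hmem : ∀ i : Fin (t.length + 1), t.toFun i ∈ Set.Icc (a ⊓ b) a := fun i =>
    ⟨h1 ▸ CompositionSeries.head_le i, h2 ▸ CompositionSeries.le_last i⟩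
  set g := infIccOrderIsoIccSup a b with hg
  have hstep : ∀ i : Fin t.length,
      JordanHolderLattice.IsMaximal
        ((g ⟨t.toFun i.castSucc, hmem _⟩ : Set.Icc b (a ⊔ b)) : Submodule R Ω)
        ((g ⟨t.toFun i.succ, hmem _⟩ : Set.Icc b (a ⊔ b)) : Submodule R Ω) := by
    intro i
    show ((g ⟨t.toFun i.castSucc, _⟩ : Set.Icc b (a ⊔ b)) : Submodule R Ω) ⋖ _
    rw [← covBy_coe_iff' Set.ordConnected_Icc]
    rw [apply_covBy_apply_iff g]
    rw [covBy_coe_iff' Set.ordConnected_Icc]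
    exact t.step i
  let t' : CompositionSeries (Submodule R Ω) :=
    ⟨t.length, fun i => (g ⟨t.toFun i, hmem i⟩ : Submodule R Ω), hstep⟩
  · have ht'1 : t'.head = b := by
      show ((g ⟨t.toFun 0, _⟩ : Set.Icc b (a ⊔ b)) : Submodule R Ω) = b
      have : t.toFun 0 = a ⊓ b := h1
      have hbot : (⟨t.toFun 0, hmem 0⟩ : Set.Icc (a ⊓ b) a) = ⟨a ⊓ b, le_refl _, inf_le_left⟩ := by
        simp [this]
      rw [hbot]
      show ((a ⊓ b) ⊔ b : Submodule R Ω) = b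
      simp
    have ht'2 : t'.last = a ⊔ b := by
      show ((g ⟨t.toFun (Fin.last t.length), _⟩ : Set.Icc b (a ⊔ b)) : Submodule R Ω) = a ⊔ b
      have : t.toFun (Fin.last t.length) = a := h2
      have htop : (⟨t.toFun (Fin.last t.length), hmem _⟩ : Set.Icc (a ⊓ b) a)
          = ⟨a, inf_le_left, le_refl _⟩ := by simp [this]
      rw [htop]
      show (a ⊔ b : Submodule R Ω) = a ⊔ b
      rfl
    have e1 := lam_add hfin (le_sup_right : b ≤ a ⊔ b) t' ht'1 ht'2
    have e2 := lam_add hfin (inf_le_left : a ⊓ b ≤ a) t h1 h2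
    have e3 : t'.length = t.length := rfl
    omega

lemma submodLength_eq_lam (N : Submodule R Ω) : submodLength N = lam hfin N := by
  have e : krullDim (Submodule R ↥N) = krullDim (Set.Iic N) :=
    krullDim_eq_of_orderIso N.mapIic
  have h1 : krullDim (Set.Iic N) = ((lam hfin N : ℕ∞) : WithBot ℕ∞) := by
    apply le_antisymm
    · apply iSup_le
      intro p
      have hsm : StrictMono (fun x : Set.Iic N => lam hfin (x : Submodule R Ω)) :=
        fun x y hxy => lam_strictMono hfin hxy
      have hb : p.length ≤ lam hfin ((p.last : Submodule R Ω)) := by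
        have := (p.map _ hsm).strictMono
        have key : ∀ i : Fin (p.length + 1), (i : ℕ) ≤ lam hfin ((p.toFun i : Submodule R Ω)) := by
          intro i
          induction i using Fin.induction with
          | zero => exact Nat.zero_le _
          | succ j ih =>
            have hlt := lam_strictMono hfin (show ((p.toFun j.castSucc : Submodule R Ω)) < _ from
              p.strictMono Fin.castSucc_lt_succ)
            have := le_trans ih hlt.le
            simpa using Nat.lt_of_le_of_lt (le_trans ih (le_refl _)) hlt
        exact key (Fin.last _)
      have hb2 : lam hfin ((p.last : Submodule R Ω)) ≤ lam hfin N :=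
        lam_mono hfin p.last.2
      exact_mod_cast Nat.cast_le.mpr (le_trans hb hb2)
    · obtain ⟨hs1, hs2⟩ := (exists_cs hfin ⊥ N bot_le).choose_spec
      set s := (exists_cs hfin ⊥ N bot_le).choose with hsdef
      let q : LTSeries (Set.Iic N) :=
        ⟨s.length, fun i => ⟨s.toFun i, hs2 ▸ CompositionSeries.le_last i⟩,
          fun i => (s.step i).lt⟩
      have hlen : lam hfin N = s.length := by
        have := lam_eq hfin s hs1
        rwa [hs2] at this
      rw [hlen]
      have hq : q.length = s.length := rfl
      rw [← hq]
      exact_mod_cast Order.LTSeries.length_le_krullDim q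
  rw [submodLength, e, h1]
  simp

end aux

/-- Over a commutative ring `R`, for an `R`-module `Ω` all of whose
submodules have finite length, `d(M,N) = λ(M) + λ(N) - 2·λ(M ⊓ N)` is a metric on the
set of submodules of `Ω`: it is nonnegative, vanishes exactly on the diagonal, is
symmetric, and satisfies the triangle inequality. -/
theorem submodule_distance_is_metric (R : Type*) [CommRing R] (Ω : Type*)
    [AddCommGroup Ω] [Module R Ω] (hfin : IsFiniteLength R Ω)
    (d : Submodule R Ω → Submodule R Ω → ℤ)
    (hd : ∀ M N, d M N = (submodLength M : ℤ) + (submodLength N : ℤ)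
      - 2 * (submodLength (M ⊓ N) : ℤ)) :
    (∀ M N, 0 ≤ d M N) ∧
    (∀ M N, d M N = 0 ↔ M = N) ∧
    (∀ M N, d M N = d N M) ∧
    (∀ M N P, d M N ≤ d M P + d P N) := by
  have hd' : ∀ M N, d M N = (lam hfin M : ℤ) + (lam hfin N : ℤ)
      - 2 * (lam hfin (M ⊓ N) : ℤ) := by
    intro M N
    rw [hd, submodLength_eq_lam hfin, submodLength_eq_lam hfin, submodLength_eq_lam hfin]
  refine ⟨?_, ?_, ?_, ?_⟩
  · intro M N
    have h1 := lam_mono hfin (inf_le_left : M ⊓ N ≤ M)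
    have h2 := lam_mono hfin (inf_le_right : M ⊓ N ≤ N)
    rw [hd']
    omega
  · intro M N
    constructor
    · intro h
      rw [hd'] at h
      by_contra hne
      have hor : M ⊓ N ≠ M ∨ M ⊓ N ≠ N := by
        by_contra hc
        push_neg at hc
        exact hne (by rw [← hc.1, hc.2])
      rcases hor with h' | h'
      · have hlt := lam_strictMono hfin (lt_of_le_of_ne (inf_le_left : M ⊓ N ≤ M) h')
        have hle := lam_mono hfin (inf_le_right : M ⊓ N ≤ N)
        omega
      · have hlt := lam_strictMono hfin (lt_of_le_of_ne (inf_le_right : M ⊓ N ≤ N) h')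
        have hle := lam_mono hfin (inf_le_left : M ⊓ N ≤ M)
        omega
    · rintro rfl
      rw [hd', inf_idem]
      ring
  · intro M N
    rw [hd', hd', inf_comm]
    ring
  · intro M N P
    rw [hd', hd', hd']
    have hdia := lam_sup_add_inf hfin (M ⊓ P) (P ⊓ N)
    have h1 : lam hfin ((M ⊓ P) ⊔ (P ⊓ N)) ≤ lam hfin P :=
      lam_mono hfin (sup_le inf_le_right inf_le_left)
    have h2 : lam hfin ((M ⊓ P) ⊓ (P ⊓ N)) ≤ lam hfin (M ⊓ N) :=
      lam_mono hfin (le_inf (le_trans inf_le_left inf_le_left)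
        (le_trans inf_le_right inf_le_right))
    omega
end

section
/- Let D be a principal ideal domain, π ∈ D a nonzero element, and R = D/(π). Then for any nonzero a, b ∈ R there exists c ∈ R such that the ideal (a + cb) equals the ideal (a) + (b) in R. -/
open UniqueFactorizationMonoid in
/-- Key lemma: in a PID, if no prime divides simultaneously `n`, `α`, `β`, then we can
shift `α` by a multiple of `β` to become coprime to `n`. -/
lemma exists_add_mul_isCoprime_aux {D : Type*} [CommRing D] [IsDomain D]
    [IsPrincipalIdealRing D] (α β n : D) (hn : n ≠ 0)
    (H : ∀ p : D, Prime p → p ∣ n → p ∣ α → ¬ p ∣ β) :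
    ∃ γ : D, IsCoprime (α + γ * β) n := by
  classical
  letI : NormalizationMonoid D := (UniqueFactorizationMonoid.normalizationMonoid (α := D)).toNormalizationMonoid
  have hpair : Pairwise fun (i j : (normalizedFactors n).toFinset) ↦
      IsCoprime (Ideal.span {(i : D)}) (Ideal.span {(j : D)}) := by
    intro i j hij
    have hi' : (i : D) ∈ normalizedFactors n := Multiset.mem_toFinset.mp i.2
    have hj' : (j : D) ∈ normalizedFactors n := Multiset.mem_toFinset.mp j.2
    rw [Ideal.isCoprime_span_singleton_iff]
    have hi : Prime (i : D) := prime_of_normalized_factor _ hi'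
    have hj : Prime (j : D) := prime_of_normalized_factor _ hj'
    rw [hi.coprime_iff_not_dvd]
    intro hdvd
    have hass : Associated (i : D) (j : D) := hi.associated_of_dvd hj hdvd
    have hni : normalize (i : D) = (i : D) := normalize_normalized_factor _ hi'
    have hnj : normalize (j : D) = (j : D) := normalize_normalized_factor _ hj'
    exact hij (Subtype.ext (by rw [← hni, ← hnj]; exact normalize_eq_normalize hdvd hass.symm.dvd))
  obtain ⟨γ, hγ⟩ := Ideal.exists_forall_sub_mem_ideal
    (I := fun i : (normalizedFactors n).toFinset ↦ Ideal.span {(i : D)})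
    hpair (fun i ↦ if (i : D) ∣ α then 1 else 0)
  refine ⟨γ, isCoprime_of_prime_dvd (fun h ↦ hn h.2) ?_⟩
  rintro z hz hzab hzn
  obtain ⟨p, hps, hassoc⟩ := exists_mem_normalizedFactors_of_dvd hn hz.irreducible hzn
  have hp : Prime p := prime_of_normalized_factor _ hps
  have hpn : p ∣ n := dvd_of_mem_normalizedFactors hps
  have hpab : p ∣ α + γ * β := hassoc.dvd_iff_dvd_left.mp hzab
  have hmem : p ∈ (normalizedFactors n).toFinset := Multiset.mem_toFinset.mpr hps
  have hγp := hγ ⟨p, hmem⟩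
  simp only [Ideal.mem_span_singleton] at hγp
  by_cases hpα : p ∣ α
  · have h1 : p ∣ γ - 1 := by simpa [hpα] using hγp
    have hγβ : p ∣ γ * β := by simpa using hpab.sub hpα
    have hpβ : p ∣ β := by
      have := hγβ.sub (h1.mul_right β)
      simpa [sub_mul] using this
    exact H p hp hpn hpα hpβ
  · have h0 : p ∣ γ := by simpa [hpα] using hγp
    exact hpα (by simpa using hpab.sub (h0.mul_right β))

/-- Let `D` be a PID, `π ∈ D` nonzero, `R = D/(π)`. For nonzero
`a, b ∈ R` there exists `c ∈ R` with `(a + c*b) = (a) + (b)` as ideals of `R`. -/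
theorem exists_gcd_combination_in_quotient (D : Type*) [CommRing D] [IsDomain D]
    [IsPrincipalIdealRing D] (π : D) (hπ : π ≠ 0)
    (a b : D ⧸ Ideal.span ({π} : Set D)) (ha : a ≠ 0) (hb : b ≠ 0) :
    ∃ c : D ⧸ Ideal.span ({π} : Set D),
      Ideal.span {a + c * b} = Ideal.span {a} ⊔ Ideal.span {b} := by
  obtain ⟨α, rfl⟩ := Ideal.Quotient.mk_surjective a
  obtain ⟨β, rfl⟩ := Ideal.Quotient.mk_surjective b
  -- the ideal (α, β, π) in D is principal
  obtain ⟨g, hg'⟩ := (IsPrincipalIdealRing.principal (Ideal.span ({α, β, π} : Set D))).principal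
  have hg : Ideal.span ({α, β, π} : Set D) = Ideal.span ({g} : Set D) := hg'
  have hgα : g ∣ α := Ideal.mem_span_singleton.mp (by rw [← hg]; exact Ideal.subset_span (by simp))
  have hgβ : g ∣ β := Ideal.mem_span_singleton.mp (by rw [← hg]; exact Ideal.subset_span (by simp))
  have hgπ : g ∣ π := Ideal.mem_span_singleton.mp (by rw [← hg]; exact Ideal.subset_span (by simp))
  obtain ⟨α₁, rfl⟩ := hgα
  obtain ⟨β₁, rfl⟩ := hgβ
  obtain ⟨π₁, rfl⟩ := hgπ
  have hg0 : g ≠ 0 := fun h ↦ hπ (by simp [h])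
  have hπ₁ : π₁ ≠ 0 := fun h ↦ hπ (by simp [h])
  -- g = u α + v β + t π gives a Bezout relation 1 = u α₁ + v β₁ + t π₁
  have hgmem : g ∈ Ideal.span ({g * α₁, g * β₁, g * π₁} : Set D) := by
    rw [hg]; exact Ideal.mem_span_singleton_self g
  rw [Ideal.mem_span_insert] at hgmem
  obtain ⟨u, z, hz, huz⟩ := hgmem
  rw [Ideal.mem_span_insert] at hz
  obtain ⟨v, w, hw, hvw⟩ := hz
  rw [Ideal.mem_span_singleton] at hw
  obtain ⟨t, rfl⟩ := hw
  have hrep : g = u * (g * α₁) + (v * (g * β₁) + g * π₁ * t) := huz.trans (by rw [hvw])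
  have hbez : (1 : D) = u * α₁ + v * β₁ + t * π₁ := by
    refine mul_left_cancel₀ hg0 ?_
    linear_combination hrep
  -- apply the key lemma
  obtain ⟨γ, hcop⟩ := exists_add_mul_isCoprime_aux α₁ β₁ π₁ hπ₁ (by
    intro p hp hpπ hpα hpβ
    refine hp.not_dvd_one (hbez ▸ ?_)
    exact ((hpα.mul_left u).add (hpβ.mul_left v)).add (hpπ.mul_left t))
  -- D-level ideal identity: (α + γβ, π) = (g) = (α, β, π)
  have hkey : Ideal.span ({g * α₁ + γ * (g * β₁), g * π₁} : Set D) = Ideal.span {g} := by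
    apply le_antisymm
    · rw [Ideal.span_le]
      rintro x hx
      simp only [Set.mem_insert_iff, Set.mem_singleton_iff] at hx
      rcases hx with rfl | rfl
      · exact Ideal.mem_span_singleton.mpr ⟨α₁ + γ * β₁, by ring⟩
      · exact Ideal.mem_span_singleton.mpr ⟨π₁, rfl⟩
    · rw [Ideal.span_le, Set.singleton_subset_iff]
      obtain ⟨x, y, hxy⟩ := hcop
      exact Ideal.mem_span_pair.mpr ⟨x, y, by linear_combination g * hxy⟩
  -- pass to the quotient
  refine ⟨Ideal.Quotient.mk _ γ, ?_⟩
  set f := Ideal.Quotient.mk (Ideal.span ({g * π₁} : Set D)) with hf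
  have hmap : ∀ x : D, Ideal.span {f x} = Ideal.map f (Ideal.span {x}) := by
    intro x; rw [Ideal.map_span, Set.image_singleton]
  have hπbot : Ideal.map f (Ideal.span ({g * π₁} : Set D)) = ⊥ := by
    rw [Ideal.map_span, Set.image_singleton]
    simp [hf]
  have h1 : f (g * α₁) + f γ * f (g * β₁) = f (g * α₁ + γ * (g * β₁)) := by
    simp [map_add, map_mul]
  rw [h1, hmap, hmap, hmap]
  rw [← Ideal.map_sup]
  have hL : Ideal.span ({g * α₁ + γ * (g * β₁)} : Set D) ⊔ Ideal.span ({g * π₁} : Set D)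
      = Ideal.span ({g * α₁ + γ * (g * β₁), g * π₁} : Set D) := by
    rw [Ideal.span_insert]
  have hR : Ideal.span ({g * α₁} : Set D) ⊔ Ideal.span ({g * β₁} : Set D)
      ⊔ Ideal.span ({g * π₁} : Set D) = Ideal.span ({g * α₁, g * β₁, g * π₁} : Set D) := by
    rw [Ideal.span_insert, Ideal.span_insert, sup_assoc]
  calc Ideal.map f (Ideal.span ({g * α₁ + γ * (g * β₁)} : Set D))
      = Ideal.map f (Ideal.span {g * α₁ + γ * (g * β₁)}) ⊔
        Ideal.map f (Ideal.span ({g * π₁} : Set D)) := by rw [hπbot, sup_bot_eq]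
    _ = Ideal.map f (Ideal.span ({g * α₁ + γ * (g * β₁), g * π₁} : Set D)) := by
        rw [← Ideal.map_sup, hL]
    _ = Ideal.map f (Ideal.span ({g * α₁, g * β₁, g * π₁} : Set D)) := by rw [hkey, hg]
    _ = Ideal.map f (Ideal.span {g * α₁} ⊔ Ideal.span {g * β₁}) := by
        rw [← hR, Ideal.map_sup, Ideal.map_sup, hπbot, sup_bot_eq]
end

section
/- Let R be a finite principal ideal ring, let Ω be a finite R-module, and let C be a set of submodules of Ω, each of length k, such that any two distinct elements of C have intersection of length at most k − δ (equivalently, the minimum submodule distance of C is at least 2δ). Then |C| is at most the number of submodules of length k − δ + 1 of any fixed submodule M ⊆ Ω with λ(M) = λ(Ω) − δ + 1. -/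
open Order

section FiniteLattice

variable {α : Type*} [Lattice α] [Finite α]

lemma aux_height_ne_top (a : α) : Order.height a ≠ ⊤ := by
  intro h
  obtain ⟨p, hlast, hlen⟩ := Order.exists_series_of_le_height a (n := Nat.card α) (by simp [h])
  have hinj : Function.Injective p.toFun := p.strictMono.injective
  have hc := Nat.card_le_card_of_injective _ hinj
  simp only [Nat.card_eq_fintype_card, Fintype.card_fin] at hc
  omega

lemma aux_height_add_one (a b : α) (hab : a < b) :
    Order.height a + 1 ≤ Order.height b := by
  rw [ENat.add_one_le_iff (aux_height_ne_top a)]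
  exact Order.height_strictMono hab (lt_top_iff_ne_top.mpr (aux_height_ne_top a))

lemma aux_head_eq_last (p : LTSeries α) (h : p.length = 0) : p.head = p.last := by
  show p.toFun _ = p.toFun _
  congr 1
  ext
  simp [h, RelSeries.last, Fin.last]

lemma aux_submodular_chain [IsModularLattice α] (b : α) (n : ℕ) :
    ∀ p : LTSeries α, p.length = n →
    Order.height (p.head ⊓ b) + Order.height (p.head ⊔ b) + p.length ≤
      Order.height (p.last ⊓ b) + Order.height (p.last ⊔ b) := by
  induction n with
  | zero =>
    intro p h
    rw [aux_head_eq_last p h, h]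
    simp
  | succ n ih =>
    intro p h
    have h0 : p.length ≠ 0 := by omega
    have e1 : p.eraseLast.last < p.last := p.eraseLast_last_rel_last h0
    have h2 := ih p.eraseLast (by simp [RelSeries.eraseLast, h])
    rw [RelSeries.head_eraseLast] at h2
    simp only [RelSeries.eraseLast, h] at h2
    set x := p.eraseLast.last with hx
    have key : Order.height (x ⊓ b) + Order.height (x ⊔ b) + 1 ≤
        Order.height (p.last ⊓ b) + Order.height (p.last ⊔ b) := by
      rcases lt_or_eq_of_le (inf_le_inf_right b e1.le) with hlt | heq
      · have h1 := aux_height_add_one _ _ hlt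
        have hmono : Order.height (x ⊔ b) ≤ Order.height (p.last ⊔ b) :=
          Order.height_mono (sup_le_sup_right e1.le b)
        calc Order.height (x ⊓ b) + Order.height (x ⊔ b) + 1
            = (Order.height (x ⊓ b) + 1) + Order.height (x ⊔ b) := by ring
          _ ≤ Order.height (p.last ⊓ b) + Order.height (p.last ⊔ b) :=
              add_le_add h1 hmono
      · have hsup : x ⊔ b < p.last ⊔ b :=
          sup_lt_sup_of_lt_of_inf_le_inf e1 heq.ge
        have h1 := aux_height_add_one _ _ hsup
        have hmono : Order.height (x ⊓ b) ≤ Order.height (p.last ⊓ b) :=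
          Order.height_mono (inf_le_inf_right b e1.le)
        calc Order.height (x ⊓ b) + Order.height (x ⊔ b) + 1
            = Order.height (x ⊓ b) + (Order.height (x ⊔ b) + 1) := by ring
          _ ≤ Order.height (p.last ⊓ b) + Order.height (p.last ⊔ b) :=
              add_le_add hmono h1
    calc Order.height (p.head ⊓ b) + Order.height (p.head ⊔ b) + (p.length : ℕ∞)
        = (Order.height (p.head ⊓ b) + Order.height (p.head ⊔ b) + n) + 1 := by
          rw [h]; push_cast; ring
      _ ≤ (Order.height (x ⊓ b) + Order.height (x ⊔ b)) + 1 := by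
          exact add_le_add_left (by exact h2) 1
      _ ≤ _ := key

lemma aux_submodular [IsModularLattice α] (a b : α) :
    Order.height a + Order.height b ≤ Order.height (a ⊓ b) + Order.height (a ⊔ b) := by
  have hn : ((Order.height a).toNat : ℕ∞) = Order.height a := ENat.coe_toNat (aux_height_ne_top a)
  set n := (Order.height a).toNat with hdefn
  obtain ⟨p, hlast, hlen⟩ := Order.exists_series_of_height_eq_coe a hn.symm
  have key := aux_submodular_chain b p.length p rfl
  rw [hlast, hlen] at key
  have hb : Order.height b ≤ Order.height (p.head ⊓ b) + Order.height (p.head ⊔ b) :=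
    le_add_of_nonneg_of_le (by simp) (Order.height_mono le_sup_right)
  rw [← hn]
  calc (n : ℕ∞) + Order.height b
      ≤ (n : ℕ∞) + (Order.height (p.head ⊓ b) + Order.height (p.head ⊔ b)) :=
        add_le_add_right hb _
    _ = Order.height (p.head ⊓ b) + Order.height (p.head ⊔ b) + (n : ℕ∞) := by ring
    _ ≤ _ := key

lemma aux_exists_le_height (x : α) (m : ℕ) (hm : (m : ℕ∞) ≤ Order.height x) :
    ∃ y : α, y ≤ x ∧ Order.height y = m := by
  have hn : ((Order.height x).toNat : ℕ∞) = Order.height x := ENat.coe_toNat (aux_height_ne_top x)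
  set n := (Order.height x).toNat with hdefn
  obtain ⟨p, hlast, hlen⟩ := Order.exists_series_of_height_eq_coe x hn.symm
  have hmn : m ≤ n := by rw [← hn] at hm; exact_mod_cast hm
  have hi : m < p.length + 1 := by omega
  refine ⟨p ⟨m, hi⟩, ?_, ?_⟩
  · rw [← hlast]
    exact p.strictMono.monotone (Fin.le_last _)
  · have := Order.height_eq_index_of_length_eq_height_last
      (p := p) (by rw [hlast, hlen]; exact hn) ⟨m, hi⟩
    simpa using this

end FiniteLattice

section Bridge

variable {R : Type*} [Ring R] {Ω : Type*} [AddCommGroup Ω] [Module R Ω] [Finite Ω]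

instance : Finite (Submodule R Ω) :=
  Finite.of_injective (fun N => (N : Set Ω)) (SetLike.coe_injective)

lemma aux_height_Iic_top (N : Submodule R Ω) :
    Order.height (⊤ : Set.Iic N) = Order.height N := by
  apply le_antisymm
  · have := Order.height_le_height_apply_of_strictMono (α := Set.Iic N)
      (Subtype.val) (Subtype.strictMono_coe _) ⊤
    simpa using this
  · apply Order.height_le
    intro p hlast
    have hle : ∀ i, p i ≤ N := fun i => by
      rw [← hlast]; exact p.strictMono.monotone (Fin.le_last i)
    let q : LTSeries (Set.Iic N) :=
      ⟨p.length, fun i => ⟨p i, hle i⟩, fun i => p.step i⟩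
    have hq : q.last = ⊤ := by
      apply Subtype.ext
      show p.last = _
      rw [hlast]; rfl
    have := Order.length_le_height_last (p := q)
    rw [hq] at this
    exact this

lemma submodLength_eq_height (N : Submodule R Ω) :
    (submodLength N : ℕ∞) = Order.height N := by
  have h1 : Order.krullDim (Submodule R ↥N) = Order.krullDim (Set.Iic N) :=
    Order.krullDim_eq_of_orderIso N.mapIic
  have h2 : Order.krullDim (Set.Iic N) = Order.height (⊤ : Set.Iic N) :=
    (Order.height_top_eq_krullDim).symm
  rw [submodLength, h1, h2, aux_height_Iic_top]
  rw [WithBot.unbotD_coe]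
  rw [ENat.coe_toNat (aux_height_ne_top N)]

end Bridge

/-- **Singleton-like bound.** Let `R` be a finite PIR, `Ω` a finite
`R`-module, and `C` a set of submodules of `Ω`, each of length `k`, such that any two
distinct elements of `C` intersect in a submodule of length at most `k - δ`. Then
`|C|` is at most the number of submodules of length `k - δ + 1` of any fixed submodule
`M ⊆ Ω` of length `λ(Ω) - δ + 1`. -/
theorem singleton_bound_submodule_codes (R : Type*) [CommRing R] [Finite R]
    [IsPrincipalIdealRing R] (Ω : Type*) [AddCommGroup Ω] [Module R Ω] [Finite Ω]
    (k δ : ℕ) (hδ : 1 ≤ δ) (hδk : δ ≤ k) (C : Finset (Submodule R Ω))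
    (hlen : ∀ M ∈ C, submodLength M = k)
    (hdist : ∀ M ∈ C, ∀ N ∈ C, M ≠ N → submodLength (M ⊓ N) ≤ k - δ)
    (M : Submodule R Ω)
    (hM : submodLength M = submodLength (⊤ : Submodule R Ω) - δ + 1) :
    C.card ≤ Nat.card {N : Submodule R Ω | N ≤ M ∧ submodLength N = k - δ + 1} := by
  classical
  have hne : ∀ N : Submodule R Ω, Order.height N ≠ ⊤ := aux_height_ne_top
  set H : Submodule R Ω → ℕ := fun N => (Order.height N).toNat with hHdef
  have hHcast : ∀ N, (H N : ℕ∞) = Order.height N := fun N => ENat.coe_toNat (hne N)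
  have hsub : ∀ N : Submodule R Ω, submodLength N = H N := by
    intro N
    have h := submodLength_eq_height N
    rw [← hHcast N] at h
    exact_mod_cast h
  have hmono : ∀ N N' : Submodule R Ω, N ≤ N' → H N ≤ H N' := fun _ _ h =>
    ENat.toNat_le_toNat (Order.height_mono h) (hne _)
  have hmod : ∀ N ∈ C, k - δ + 1 ≤ H (N ⊓ M) := by
    intro N hN
    have h1 := aux_submodular N M
    have hk : H N = k := by rw [← hsub N]; exact hlen N hN
    have hMk : H M = H ⊤ - δ + 1 := by rw [← hsub M, ← hsub ⊤]; exact hM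
    have hNt : H N ≤ H ⊤ := hmono _ _ le_top
    have hst : H (N ⊔ M) ≤ H ⊤ := hmono _ _ le_top
    have h2 : H N + H M ≤ H (N ⊓ M) + H (N ⊔ M) := by
      rw [← hHcast N, ← hHcast M, ← hHcast (N ⊓ M), ← hHcast (N ⊔ M)] at h1
      exact_mod_cast h1
    omega
  have hchoice : ∀ N ∈ C, ∃ y : Submodule R Ω, y ≤ N ⊓ M ∧ H y = k - δ + 1 := by
    intro N hN
    obtain ⟨y, hy1, hy2⟩ := aux_exists_le_height (N ⊓ M) (k - δ + 1)
      (by rw [← hHcast (N ⊓ M)]; exact_mod_cast hmod N hN)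
    refine ⟨y, hy1, ?_⟩
    rw [← hHcast y] at hy2
    exact_mod_cast hy2
  choose f hf1 hf2 using hchoice
  set S := {N : Submodule R Ω | N ≤ M ∧ submodLength N = k - δ + 1} with hS
  let F : ↥C → ↥S := fun N =>
    ⟨f N.1 N.2, le_trans (hf1 N.1 N.2) inf_le_right, by rw [hsub]; exact hf2 N.1 N.2⟩
  have hinj : Function.Injective F := by
    rintro ⟨N, hN⟩ ⟨N', hN'⟩ h
    have hy : f N hN = f N' hN' := congrArg Subtype.val h
    have hNN : N = N' := by
      by_contra hcon
      have h1 : f N hN ≤ N ⊓ N' := le_inf (le_trans (hf1 N hN) inf_le_left)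
        (hy ▸ le_trans (hf1 N' hN') inf_le_left)
      have h2 : H (f N hN) ≤ H (N ⊓ N') := hmono _ _ h1
      have h3 : submodLength (N ⊓ N') ≤ k - δ := hdist N hN N' hN' hcon
      rw [hsub] at h3
      have h4 := hf2 N hN
      omega
    exact Subtype.ext hNN
  calc C.card = Nat.card ↥C := (Nat.card_eq_finsetCard C).symm
    _ ≤ Nat.card ↥S := Nat.card_le_card_of_injective F hinj
end

section
/- Let R be a finite principal ideal ring, Ω a finite R-module, and C a collection of submodules of Ω each of length k such that any two distinct members intersect in a submodule of length at most k − δ. Then |C| · (minimum over submodules M of Ω of length k of the number of length-(k−δ+1) submodules of M) is at most the total number of length-(k−δ+1) submodules of Ω. -/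
lemma krullDim_le_card_aux (α : Type*) [PartialOrder α] [Fintype α] :
    Order.krullDim α ≤ ((Fintype.card α : ℕ∞) : WithBot ℕ∞) := by
  refine iSup_le fun p => ?_
  have := p.length_lt_card
  exact_mod_cast le_of_lt (by exact_mod_cast this :
    (p.length : WithBot ℕ∞) < ((Fintype.card α : ℕ∞) : WithBot ℕ∞))

lemma submodLength_mono {R : Type*} [Ring R] {Ω : Type*} [AddCommGroup Ω]
    [Module R Ω] [Finite Ω] {N P : Submodule R Ω} (h : N ≤ P) :
    submodLength N ≤ submodLength P := by
  classical
  have hfN : Finite (Submodule R ↥N) :=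
    Finite.of_injective (fun M => (M : Set ↥N)) SetLike.coe_injective
  have hfP : Finite (Submodule R ↥P) :=
    Finite.of_injective (fun M => (M : Set ↥P)) SetLike.coe_injective
  have fN := Fintype.ofFinite (Submodule R ↥N)
  have fP := Fintype.ofFinite (Submodule R ↥P)
  have hmono : Monotone (Submodule.map (Submodule.inclusion h)) :=
    fun _ _ hle => Submodule.map_mono hle
  have hF : StrictMono (Submodule.map (Submodule.inclusion h)) :=
    hmono.strictMono_of_injective
      (Submodule.map_injective_of_injective (Submodule.inclusion_injective h))
  have hk : Order.krullDim (Submodule R ↥N) ≤ Order.krullDim (Submodule R ↥P) :=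
    Order.krullDim_le_of_strictMono _ hF
  have h0a : (0 : WithBot ℕ∞) ≤ Order.krullDim (Submodule R ↥N) :=
    Order.krullDim_nonneg
  have h0b : (0 : WithBot ℕ∞) ≤ Order.krullDim (Submodule R ↥P) :=
    Order.krullDim_nonneg
  have hbcard := krullDim_le_card_aux (Submodule R ↥P)
  unfold submodLength
  lift Order.krullDim (Submodule R ↥N) to ℕ∞ using (by
    intro hbot; rw [hbot] at h0a; exact absurd h0a (by simp)) with a ha
  lift Order.krullDim (Submodule R ↥P) to ℕ∞ using (by
    intro hbot; rw [hbot] at h0b; exact absurd h0b (by simp)) with b hb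
  rw [WithBot.unbotD_coe, WithBot.unbotD_coe]
  have hab : a ≤ b := by exact_mod_cast hk
  have hbtop : b ≠ ⊤ := by
    intro htop
    rw [htop] at hbcard
    exact absurd (le_antisymm le_top (by exact_mod_cast hbcard))
      (by simp : (Fintype.card (Submodule R ↥P) : ℕ∞) ≠ ⊤)
  exact ENat.toNat_le_toNat hab hbtop

/-- **Sphere-packing-like bound.** Let `R` be a finite PIR, `Ω` a finite
`R`-module, and `C` a collection of submodules of `Ω` each of length `k` such that any
two distinct members intersect in a submodule of length at most `k - δ`. Then
`|C| · min_{λ(M)=k} #{N ≤ M : λ(N) = k-δ+1} ≤ #{N ≤ Ω : λ(N) = k-δ+1}`. -/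
theorem counting_bound_submodule_codes (R : Type*) [CommRing R] [Finite R]
    [IsPrincipalIdealRing R] (Ω : Type*) [AddCommGroup Ω] [Module R Ω] [Finite Ω]
    (k δ : ℕ) (C : Finset (Submodule R Ω))
    (hlen : ∀ M ∈ C, submodLength M = k)
    (hdist : ∀ M ∈ C, ∀ N ∈ C, M ≠ N → submodLength (M ⊓ N) ≤ k - δ) :
    C.card * sInf ((fun M : Submodule R Ω =>
        Nat.card {N : Submodule R Ω | N ≤ M ∧ submodLength N = k - δ + 1}) ''
        {M : Submodule R Ω | submodLength M = k})
      ≤ Nat.card {N : Submodule R Ω | submodLength N = k - δ + 1} := by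
  classical
  have hfin : Finite (Submodule R Ω) :=
    Finite.of_injective (fun M => (M : Set Ω)) SetLike.coe_injective
  have := Fintype.ofFinite (Submodule R Ω)
  set c := k - δ + 1 with hc
  set f : Submodule R Ω → Finset (Submodule R Ω) :=
    (fun M => Finset.univ.filter fun N => N ≤ M ∧ submodLength N = c) with hfdef
  have hcard : ∀ M : Submodule R Ω,
      Nat.card {N : Submodule R Ω | N ≤ M ∧ submodLength N = c} = (f M).card := by
    intro M
    rw [Nat.card_eq_fintype_card]
    simp [hfdef, Fintype.card_subtype]
  set s := sInf ((fun M : Submodule R Ω =>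
      Nat.card {N : Submodule R Ω | N ≤ M ∧ submodLength N = c}) ''
      {M : Submodule R Ω | submodLength M = k}) with hs
  have hsle : ∀ M ∈ C, s ≤ (f M).card := by
    intro M hM
    rw [← hcard M]
    exact csInf_le (OrderBot.bddBelow _) ⟨M, hlen M hM, rfl⟩
  have hdisj : ∀ M ∈ C, ∀ M' ∈ C, M ≠ M' → Disjoint (f M) (f M') := by
    intro M hM M' hM' hne
    rw [Finset.disjoint_left]
    intro N hN hN'
    simp only [hfdef, Finset.mem_filter, Finset.mem_univ, true_and] at hN hN'
    have hle : N ≤ M ⊓ M' := le_inf hN.1 hN'.1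
    have := (submodLength_mono hle).trans (hdist M hM M' hM' hne)
    omega
  calc C.card * s = ∑ _M ∈ C, s := by rw [Finset.sum_const, smul_eq_mul, mul_comm]
    _ ≤ ∑ M ∈ C, (f M).card := Finset.sum_le_sum hsle
    _ = (C.biUnion f).card := (Finset.card_biUnion hdisj).symm
    _ ≤ (Finset.univ.filter fun N : Submodule R Ω => submodLength N = c).card := by
        apply Finset.card_le_card
        intro N hN
        simp only [Finset.mem_biUnion, hfdef, Finset.mem_filter, Finset.mem_univ,
          true_and] at hN ⊢
        obtain ⟨M, _, _, h2⟩ := hN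
        exact h2
    _ = Nat.card {N : Submodule R Ω | submodLength N = c} := by
        rw [Nat.card_eq_fintype_card]
        simp [Fintype.card_subtype]
end

section
/- Let F be a finite field contained as a subring of a finite commutative ring R (with the same identity), and let V, W ⊆ F^n be F-subspaces. Then the intersection of the R-spans of V and W in R^n equals the R-span of V ∩ W. -/
open Submodule Set

section aux

variable {F R : Type*} [Field F] [CommRing R] (ι : F →+* R) {n k : ℕ}

/-- Images under coordinatewise `ι` of `F`-linearly independent vectors are
`R`-linearly independent. -/
private lemma li_map (v : Fin k → (Fin n → F)) (hv : LinearIndependent F v) :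
    LinearIndependent R (fun i => (fun j => ι (v i j)) : Fin k → (Fin n → R)) := by
  classical
  set M : Matrix (Fin n) (Fin k) F := Matrix.of fun j i => v i j with hM
  have hker : LinearMap.ker M.mulVecLin = ⊥ := by
    rw [LinearMap.ker_eq_bot']
    intro c hc
    have h0 : ∑ i, c i • v i = 0 := by
      funext j
      have := congrFun hc j
      simpa [Matrix.mulVec, dotProduct, hM, Finset.sum_apply, mul_comm] using this
    funext i
    exact Fintype.linearIndependent_iff.mp hv c h0 i
  obtain ⟨g, hg⟩ := M.mulVecLin.exists_leftInverse_of_injective hker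
  set N : Matrix (Fin k) (Fin n) F := LinearMap.toMatrix' g with hN
  have hNM : N * M = 1 := by
    apply Matrix.toLin'.injective
    rw [Matrix.toLin'_mul, Matrix.toLin'_one]
    have h1 : Matrix.toLin' N = g := by rw [hN, Matrix.toLin'_toMatrix']
    have h2 : Matrix.toLin' M = M.mulVecLin := rfl
    rw [h1, h2, hg]
  have hNM' : N.map ι * M.map ι = 1 := by
    rw [← Matrix.map_mul, hNM, Matrix.map_one ι ι.map_zero ι.map_one]
  rw [Fintype.linearIndependent_iff]
  intro c hc i
  have h0 : (M.map ι).mulVec c = 0 := by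
    funext j
    have := congrFun hc j
    simpa [Matrix.mulVec, dotProduct, hM, Finset.sum_apply, mul_comm] using this
  have : c = 0 := by
    have := congrArg (fun x => (N.map ι).mulVec x) h0
    simpa [Matrix.mulVec_mulVec, hNM'] using this
  simp [this]

/-- The `R`-span of the image of a subspace `V` is the `R`-span of the image of a
basis of `V`. -/
private lemma span_image_eq (V : Subspace F (Fin n → F)) [Finite F] :
    ∃ w : Fin (Module.finrank F V) → (Fin n → F), LinearIndependent F w ∧ (∀ i, w i ∈ V) ∧
      Submodule.span R ((fun v : Fin n → F => fun i => ι (v i)) '' V) =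
        Submodule.span R
          (Set.range (fun i => (fun j => ι (w i j)) : Fin (Module.finrank F V) → (Fin n → R))) := by
  set f : (Fin n → F) → (Fin n → R) := fun v => fun i => ι (v i) with hf
  let b := Module.finBasis F V
  refine ⟨fun i => (b i : Fin n → F), b.linearIndependent.map' V.subtype V.ker_subtype,
    fun i => (b i).2, ?_⟩
  have hw_span : Submodule.span F (Set.range (fun i => ((b i : V) : Fin n → F))) = V := by
    have : Set.range (fun i => ((b i : V) : Fin n → F)) = V.subtype '' Set.range b := by
      rw [← Set.range_comp]; rfl
    rw [this, ← Submodule.map_span, b.span_eq, Submodule.map_top, Submodule.range_subtype]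
  apply le_antisymm
  · rw [Submodule.span_le]
    rintro _ ⟨x, hx, rfl⟩
    have hx' : x ∈ Submodule.span F (Set.range fun i => ((b i : V) : Fin n → F)) := by
      rw [hw_span]; exact hx
    clear hx
    induction hx' using Submodule.span_induction with
    | mem y hy =>
      obtain ⟨i, rfl⟩ := hy
      exact Submodule.subset_span ⟨i, rfl⟩
    | zero =>
      have : f 0 = 0 := by funext j; simp [hf]
      rw [this]; exact Submodule.zero_mem _
    | add y z _ _ hy hz =>
      have : f (y + z) = f y + f z := by funext j; simp [hf]
      rw [this]; exact Submodule.add_mem _ hy hz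
    | smul a y _ hy =>
      have : f (a • y) = ι a • f y := by funext j; simp [hf]
      rw [this]; exact Submodule.smul_mem _ _ hy
  · rw [Submodule.span_le]
    rintro _ ⟨i, rfl⟩
    exact Submodule.subset_span ⟨(b i : Fin n → F), (b i).2, rfl⟩

/-- The `R`-span of the image of `V` has cardinality `|R| ^ dim V`. -/
private lemma card_span_image [Finite F] [Finite R] (V : Subspace F (Fin n → F)) :
    Nat.card (Submodule.span R ((fun v : Fin n → F => fun i => ι (v i)) '' V)) =
      Nat.card R ^ Module.finrank F V := by
  obtain ⟨w, hli, hmem, hspan⟩ := span_image_eq ι V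
  rw [hspan]
  set g : Fin (Module.finrank F V) → (Fin n → R) := fun i => fun j => ι (w i j) with hg
  have hliR : LinearIndependent R g := li_map ι w hli
  set φ := Fintype.linearCombination R g with hφ
  have hrange : LinearMap.range φ = Submodule.span R (Set.range g) :=
    Fintype.range_linearCombination R g
  have hker : LinearMap.ker φ = ⊥ := by
    rw [LinearMap.ker_eq_bot']
    intro c hc
    funext i
    exact Fintype.linearIndependent_iff.mp hliR c
      (by simpa [hφ, Fintype.linearCombination_apply] using hc) i
  have e : (Fin (Module.finrank F V) → R) ≃ (Submodule.span R (Set.range g)) := by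
    rw [← hrange]
    exact (LinearEquiv.ofInjective φ (LinearMap.ker_eq_bot.mp hker)).toEquiv
  rw [← Nat.card_congr e, Nat.card_fun]
  simp

/-- Images of subspaces turn suprema into suprema of spans. -/
private lemma span_image_sup (V W : Subspace F (Fin n → F)) :
    Submodule.span R ((fun v : Fin n → F => fun i => ι (v i)) '' V) ⊔
      Submodule.span R ((fun v : Fin n → F => fun i => ι (v i)) '' W) =
    Submodule.span R ((fun v : Fin n → F => fun i => ι (v i)) '' ↑(V ⊔ W)) := by
  set f : (Fin n → F) → (Fin n → R) := fun v => fun i => ι (v i) with hf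
  apply le_antisymm
  · apply sup_le <;> apply Submodule.span_mono <;> apply Set.image_mono
    · exact fun x hx => (le_sup_left : V ≤ V ⊔ W) hx
    · exact fun x hx => (le_sup_right : W ≤ V ⊔ W) hx
  · rw [Submodule.span_le]
    rintro _ ⟨x, hx, rfl⟩
    obtain ⟨y, hy, z, hz, rfl⟩ := Submodule.mem_sup.mp hx
    have : f (y + z) = f y + f z := by funext j; simp [hf]
    rw [this]
    exact Submodule.add_mem _
      (Submodule.mem_sup_left (Submodule.subset_span ⟨y, hy, rfl⟩))
      (Submodule.mem_sup_right (Submodule.subset_span ⟨z, hz, rfl⟩))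

/-- Second isomorphism theorem cardinality identity. -/
private lemma card_sup_mul_card_inf {R M : Type*} [Ring R] [AddCommGroup M] [Module R M]
    [Finite M] (p q : Submodule R M) :
    Nat.card ↥(p ⊔ q) * Nat.card ↥(p ⊓ q) = Nat.card ↥p * Nat.card ↥q := by
  have h1 : Nat.card ↥p =
      Nat.card ↥(Submodule.comap p.subtype (p ⊓ q)) *
        Nat.card (↥p ⧸ Submodule.comap p.subtype (p ⊓ q)) :=
    Submodule.card_eq_card_quotient_mul_card _
  have h2 : Nat.card ↥(p ⊔ q) =
      Nat.card ↥(Submodule.comap (p ⊔ q).subtype q) *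
        Nat.card (↥(p ⊔ q) ⧸ Submodule.comap (p ⊔ q).subtype q) :=
    Submodule.card_eq_card_quotient_mul_card _
  have e1 : Nat.card ↥(Submodule.comap p.subtype (p ⊓ q)) = Nat.card ↥(p ⊓ q) :=
    Nat.card_congr (Submodule.comapSubtypeEquivOfLe inf_le_left).toEquiv
  have e2 : Nat.card ↥(Submodule.comap (p ⊔ q).subtype q) = Nat.card ↥q :=
    Nat.card_congr (Submodule.comapSubtypeEquivOfLe le_sup_right).toEquiv
  have e3 : Nat.card (↥p ⧸ Submodule.comap p.subtype (p ⊓ q)) =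
      Nat.card (↥(p ⊔ q) ⧸ Submodule.comap (p ⊔ q).subtype q) :=
    Nat.card_congr (LinearMap.quotientInfEquivSupQuotient p q).toEquiv
  rw [h2, e2, h1, e1, e3]
  ring

end aux

/-- Let `F` be a finite field contained as a subring (via a ring
embedding `ι : F →+* R`) of a finite commutative ring `R`, and let `V, W ⊆ Fⁿ` be
`F`-subspaces. Then the intersection of the `R`-spans of `V` and `W` in `Rⁿ` equals
the `R`-span of `V ∩ W`. -/
theorem span_inf_span_eq_span_inf (F : Type*) [Field F] [Finite F]
    (R : Type*) [CommRing R] [Finite R] (ι : F →+* R) (n : ℕ)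
    (V W : Subspace F (Fin n → F)) :
    Submodule.span R ((fun v : Fin n → F => fun i => ι (v i)) '' V) ⊓
      Submodule.span R ((fun v : Fin n → F => fun i => ι (v i)) '' W) =
    Submodule.span R ((fun v : Fin n → F => fun i => ι (v i)) '' ↑(V ⊓ W)) := by
  set f : (Fin n → F) → (Fin n → R) := fun v => fun i => ι (v i) with hf
  set A := Submodule.span R (f '' V) with hA
  set B := Submodule.span R (f '' W) with hB
  set C := Submodule.span R (f '' ↑(V ⊓ W)) with hC
  -- C ≤ A ⊓ B
  have hle : C ≤ A ⊓ B := by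
    apply le_inf <;> apply Submodule.span_mono <;> apply Set.image_mono
    · exact fun x hx => hx.1
    · exact fun x hx => hx.2
  -- cardinalities
  have hcA : Nat.card A = Nat.card R ^ Module.finrank F V := card_span_image ι V
  have hcB : Nat.card B = Nat.card R ^ Module.finrank F W := card_span_image ι W
  have hcC : Nat.card C = Nat.card R ^ Module.finrank F ↥(V ⊓ W) := card_span_image ι (V ⊓ W)
  have hsup : A ⊔ B = Submodule.span R (f '' ↑(V ⊔ W)) := span_image_sup ι V W
  have hcS : Nat.card ↥(A ⊔ B) = Nat.card R ^ Module.finrank F ↥(V ⊔ W) := by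
    rw [hsup]; exact card_span_image ι (V ⊔ W)
  have hdim : Module.finrank F ↥(V ⊔ W) + Module.finrank F ↥(V ⊓ W) =
      Module.finrank F ↥V + Module.finrank F ↥W :=
    Submodule.finrank_sup_add_finrank_inf_eq V W
  have hmul : Nat.card ↥(A ⊔ B) * Nat.card ↥(A ⊓ B) = Nat.card ↥A * Nat.card ↥B :=
    card_sup_mul_card_inf A B
  have hcardinf : Nat.card ↥(A ⊓ B) = Nat.card C := by
    have hpos : 0 < Nat.card R ^ Module.finrank F ↥(V ⊔ W) :=
      pow_pos Nat.card_pos _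
    apply Nat.eq_of_mul_eq_mul_left hpos
    calc Nat.card R ^ Module.finrank F ↥(V ⊔ W) * Nat.card ↥(A ⊓ B)
        = Nat.card ↥(A ⊔ B) * Nat.card ↥(A ⊓ B) := by rw [hcS]
      _ = Nat.card ↥A * Nat.card ↥B := hmul
      _ = Nat.card R ^ (Module.finrank F ↥V + Module.finrank F ↥W) := by
          rw [hcA, hcB, pow_add]
      _ = Nat.card R ^ (Module.finrank F ↥(V ⊔ W) + Module.finrank F ↥(V ⊓ W)) := by
          rw [hdim]
      _ = Nat.card R ^ Module.finrank F ↥(V ⊔ W) * Nat.card C := by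
          rw [pow_add, hcC]
  -- conclude equality from inclusion and equal cardinalities
  symm
  apply SetLike.coe_injective
  apply Set.eq_of_subset_of_ncard_le hle
  · rw [← Nat.card_coe_set_eq, ← Nat.card_coe_set_eq]
    exact hcardinf.le
end
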